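/- Suppose the superdimension M = m − 2n is not in {0, −2, −4, …}. Let H_k ∈ ℋ_k be a spherical harmonic of degree k. Then for all integers i, j ≥ 0: if i ≤ j, Δ^{i}(x^{2j} H_k) = c_{i,j,k} · x^{2j−2i} H_k with c_{i,j,k} = 4^{i} · (j!/(j−i)!) · ∏_{r=1}^{i} (k + M/2 + j − r) (equivalently c_{i,j,k} = 4^{i} (j!/(j−i)!) Γ(k + M/2 + j)/Γ(k + M/2 + j − i)); and if i > j, Δ^{i}(x^{2j} H_k) = 0. -/

import Mathlib

set_option synthInstance.maxHeartbeats 1000000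
set_option maxHeartbeats 1000000

open scoped TensorProduct

noncomputable section

namespace Super

/-- The algebra of ordinary polynomials in `m` commuting variables. -/
abbrev Poly (m : ℕ) := MvPolynomial (Fin m) ℝ

/-- The Grassmann algebra on `2n` anticommuting generators. -/
abbrev Grass (n : ℕ) := ExteriorAlgebra ℝ (Fin (2 * n) → ℝ)

/-- The algebra `𝒫` of superpolynomials. -/
abbrev P (m n : ℕ) := Poly m ⊗[ℝ] Grass n

variable (m n : ℕ)

/-- The anticommuting generator `x̀_j` (0-indexed). -/
def gg (j : Fin (2 * n)) : Grass n := ExteriorAlgebra.ι ℝ (Pi.single j 1)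

/-- The odd derivation `∂_{x̀_j}` on the Grassmann algebra: contraction with the
`j`-th dual basis vector. -/
def gd (j : Fin (2 * n)) : Module.End ℝ (Grass n) :=
  CliffordAlgebra.contractLeft (LinearMap.proj j)

def idx0 (j : Fin n) : Fin (2 * n) := ⟨2 * j.val, by have := j.isLt; omega⟩
def idx1 (j : Fin n) : Fin (2 * n) := ⟨2 * j.val + 1, by have := j.isLt; omega⟩

/-- `∂_{x_i}` acting on superpolynomials. -/
def dx (i : Fin m) : Module.End ℝ (P m n) :=
  TensorProduct.map (MvPolynomial.pderiv i).toLinearMap LinearMap.id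

/-- `∂_{x̀_j}` acting on superpolynomials. -/
def dg (j : Fin (2 * n)) : Module.End ℝ (P m n) :=
  TensorProduct.map LinearMap.id (gd n j)

/-- multiplication by `x_i`. -/
def mulX (i : Fin m) : Module.End ℝ (P m n) :=
  LinearMap.mulLeft ℝ ((MvPolynomial.X i : Poly m) ⊗ₜ (1 : Grass n))

/-- multiplication by `x̀_j`. -/
def mulG (j : Fin (2 * n)) : Module.End ℝ (P m n) :=
  LinearMap.mulLeft ℝ ((1 : Poly m) ⊗ₜ gg n j)

/-- The super-Laplace operator
`Δ = 4 ∑_{j=1}^n ∂_{x̀_{2j-1}} ∂_{x̀_{2j}} - ∑_{i=1}^m ∂_{x_i}²` (written 0-indexed). -/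
def Delta : Module.End ℝ (P m n) :=
  4 • (∑ j : Fin n, dg m n (idx0 n j) ∘ₗ dg m n (idx1 n j)) -
    ∑ i : Fin m, dx m n i ∘ₗ dx m n i

/-- The super-Euler operator `𝔼 = ∑ x_i ∂_{x_i} + ∑ x̀_j ∂_{x̀_j}`. -/
def Euler : Module.End ℝ (P m n) :=
  ∑ i : Fin m, mulX m n i ∘ₗ dx m n i + ∑ j : Fin (2 * n), mulG m n j ∘ₗ dg m n j

/-- The even element `x² = ∑_{j=1}^n x̀_{2j-1} x̀_{2j} - ∑_{i=1}^m x_i²`. -/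
def xsq : P m n :=
  (1 : Poly m) ⊗ₜ (∑ j : Fin n, gg n (idx0 n j) * gg n (idx1 n j)) -
    ∑ i : Fin m, (MvPolynomial.X i * MvPolynomial.X i : Poly m) ⊗ₜ (1 : Grass n)

/-- The superdimension `M = m - 2n`. -/
def Mdim : ℤ := (m : ℤ) - 2 * n

/-- Evaluation at the origin: the constant term of a superpolynomial. -/
def eval0 : P m n →ₗ[ℝ] ℝ :=
  (TensorProduct.lid ℝ ℝ).toLinearMap ∘ₗ
    TensorProduct.map (MvPolynomial.aeval (fun _ : Fin m => (0 : ℝ))).toLinearMap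
      (ExteriorAlgebra.algebraMapInv).toLinearMap

/-- `𝒫_k`, the space of homogeneous superpolynomials of degree `k`
(the eigenspace of `𝔼` with eigenvalue `k`). -/
def Pk (k : ℕ) : Submodule ℝ (P m n) :=
  LinearMap.ker (Euler m n - (k : ℝ) • LinearMap.id)

/-- `ℋ_k`, the space of spherical harmonics of degree `k`. -/
def Hk (k : ℕ) : Submodule ℝ (P m n) :=
  Pk m n k ⊓ LinearMap.ker (Delta m n)

/-- The integral over the supersphere (Pizzetti formula with `m` replaced by `M`).
Terms where `k + M/2` is a pole of `Γ` vanish automatically since `Real.Gamma`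
is zero at nonpositive integers. -/
def SS (R : P m n) : ℝ :=
  ∑' k : ℕ, (-1 : ℝ) ^ k * (2 * Real.pi ^ ((Mdim m n : ℝ) / 2)) /
      (4 ^ k * k.factorial * Real.Gamma ((k : ℝ) + (Mdim m n : ℝ) / 2)) *
    eval0 m n ((Delta m n ^ k) R)

/-- The integral over the superball. -/
def SB (R : P m n) : ℝ :=
  ∑' k : ℕ, (-1 : ℝ) ^ k * Real.pi ^ ((Mdim m n : ℝ) / 2) /
      (4 ^ k * k.factorial * Real.Gamma ((k : ℝ) + (Mdim m n : ℝ) / 2 + 1)) *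
    eval0 m n ((Delta m n ^ k) R)

/-- The super Laplace–Beltrami operator `Δ_LB = x²Δ - 𝔼(M - 2 + 𝔼)`. -/
def DeltaLB : Module.End ℝ (P m n) :=
  LinearMap.mulLeft ℝ (xsq m n) ∘ₗ Delta m n -
    Euler m n ∘ₗ (((Mdim m n : ℝ) - 2) • LinearMap.id + Euler m n)

end Super

namespace Super
variable {m n : ℕ}

lemma gd_gg_mul (j k : Fin (2*n)) (f : Grass n) :
    gd n j (gg n k * f) = (if j = k then f else 0) - gg n k * gd n j f := by
  have h := CliffordAlgebra.contractLeft_ι_mul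
    (Q := (0 : QuadraticForm ℝ (Fin (2*n) → ℝ)))
    (LinearMap.proj j) (Pi.single k 1) f
  simpa [gd, gg, Pi.single_apply] using h

lemma gd_gg_mul_ne {j k : Fin (2*n)} (hjk : j ≠ k) (f : Grass n) :
    gd n j (gg n k * f) = -(gg n k * gd n j f) := by
  rw [gd_gg_mul, if_neg hjk, zero_sub]

lemma gd_gg_mul_eq (j : Fin (2*n)) (f : Grass n) :
    gd n j (gg n j * f) = f - gg n j * gd n j f := by
  rw [gd_gg_mul, if_pos rfl]

lemma gg_anticomm (a b : Fin (2*n)) (h : Grass n) :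
    gg n a * (gg n b * h) = -(gg n b * (gg n a * h)) := by
  have hs : gg n a * gg n b = -(gg n b * gg n a) := by
    rw [eq_neg_iff_add_eq_zero]
    simpa [gg] using ExteriorAlgebra.ι_add_mul_swap (R := ℝ)
      (Pi.single a 1 : Fin (2*n) → ℝ) (Pi.single b 1)
  rw [← mul_assoc, hs, neg_mul, mul_assoc]

lemma gg_comm3 (a b c : Fin (2*n)) (h : Grass n) :
    gg n a * (gg n b * (gg n c * h)) = gg n b * (gg n c * (gg n a * h)) := by
  rw [gg_anticomm a b, gg_anticomm a c, mul_neg, neg_neg]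

lemma idx0_ne_idx1 (j l : Fin n) : idx0 n j ≠ idx1 n l := by
  simp only [idx0, idx1, Fin.ext_iff, ne_eq]; omega

lemma idx1_ne_idx0 (j l : Fin n) : idx1 n j ≠ idx0 n l := by
  simp only [idx0, idx1, Fin.ext_iff, ne_eq]; omega

lemma idx0_eq_iff (j l : Fin n) : idx0 n j = idx0 n l ↔ j = l := by
  simp only [idx0, Fin.ext_iff]; omega

lemma idx1_eq_iff (j l : Fin n) : idx1 n j = idx1 n l ↔ j = l := by
  simp only [idx1, Fin.ext_iff]; omega

end Super
namespace Super
variable {m n : ℕ}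

/-- Pairing equivalence `Fin n × Fin 2 ≃ Fin (2*n)`. -/
def pairEquiv (n : ℕ) : Fin n × Fin 2 ≃ Fin (2*n) where
  toFun x := ⟨2 * x.1.val + x.2.val, by have := x.1.isLt; have := x.2.isLt; omega⟩
  invFun k := (⟨k.val / 2, by have := k.isLt; omega⟩, ⟨k.val % 2, by omega⟩)
  left_inv x := by
    have := x.2.isLt
    ext <;> simp <;> omega
  right_inv k := by
    ext; simp; omega

lemma sum_pair {M : Type*} [AddCommMonoid M] (h : Fin (2*n) → M) :
    ∑ q : Fin (2*n), h q = ∑ j : Fin n, (h (idx0 n j) + h (idx1 n j)) := by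
  rw [← Equiv.sum_comp (pairEquiv n) h, Fintype.sum_prod_type]
  refine Finset.sum_congr rfl fun j _ => ?_
  rw [Fin.sum_univ_two]
  congr 1 <;> · congr 1; ext; simp [pairEquiv, idx0, idx1]

end Super
namespace Super
variable {m n : ℕ}

lemma gg_sq (a : Fin (2*n)) (h : Grass n) : gg n a * (gg n a * h) = 0 := by
  rw [← mul_assoc]
  rw [show gg n a * gg n a = 0 from ExteriorAlgebra.ι_sq_zero _, zero_mul]

/-- `GgF g = ∑_j ∂_{a_j}∂_{b_j} g`, the Grassmann part of `Δ` (without the 4). -/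
def GgF (n : ℕ) (g : Grass n) : Grass n :=
  ∑ j : Fin n, gd n (idx0 n j) (gd n (idx1 n j) g)

/-- Grassmann Euler operator. -/
def EgF (n : ℕ) (g : Grass n) : Grass n :=
  ∑ q : Fin (2*n), gg n q * gd n q g

/-- `s = ∑_j x̀_{a_j} x̀_{b_j}`. -/
def sG (n : ℕ) : Grass n :=
  ∑ j : Fin n, gg n (idx0 n j) * gg n (idx1 n j)

/-- per-pair commutator of `∂_a ∂_b` with multiplication by `x̀_{a'} x̀_{b'}` -/
lemma grassD (j l : Fin n) (g : Grass n) :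
    gd n (idx0 n j) (gd n (idx1 n j) (gg n (idx0 n l) * (gg n (idx1 n l) * g))) =
      gg n (idx0 n l) * (gg n (idx1 n l) *
        (gd n (idx0 n j) (gd n (idx1 n j) g))) +
      (if j = l then gg n (idx0 n j) * gd n (idx0 n j) g
          + gg n (idx1 n j) * gd n (idx1 n j) g - g else 0) := by
  rcases eq_or_ne j l with rfl | hjl
  · simp only [if_pos rfl, gd_gg_mul_ne (idx1_ne_idx0 j j), gd_gg_mul_eq, map_neg, map_sub,
      mul_sub, gd_gg_mul_ne (idx0_ne_idx1 j j), mul_neg, neg_neg, neg_sub, sub_neg_eq_add]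
    abel_nf
    exact add_left_comm _ _ _
  · have h1 : idx1 n j ≠ idx0 n l := idx1_ne_idx0 j l
    have h2 : idx1 n j ≠ idx1 n l := fun h => hjl ((idx1_eq_iff j l).mp h)
    have h3 : idx0 n j ≠ idx0 n l := fun h => hjl ((idx0_eq_iff j l).mp h)
    have h4 : idx0 n j ≠ idx1 n l := idx0_ne_idx1 j l
    simp only [if_neg hjl, gd_gg_mul_ne h1, gd_gg_mul_ne h2, gd_gg_mul_ne h3, gd_gg_mul_ne h4,
      map_neg, mul_neg, neg_neg, add_zero]

/-- per-generator step for the Euler commutator. -/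
lemma grassE_step {a b : Fin (2*n)} (hab : a ≠ b) (q : Fin (2*n)) (g : Grass n) :
    gg n q * gd n q (gg n a * (gg n b * g)) =
      (if q = a then gg n a * (gg n b * g) else 0) +
      (if q = b then gg n a * (gg n b * g) else 0) +
      gg n a * (gg n b * (gg n q * gd n q g)) := by
  rcases eq_or_ne q a with rfl | hqa
  · rw [gd_gg_mul_eq, mul_sub, gg_sq, sub_zero, if_pos rfl, if_neg hab,
      gg_comm3 q b q, gg_sq, mul_zero, add_zero, add_zero]
  · rcases eq_or_ne q b with rfl | hqb
    · rw [gd_gg_mul_ne hqa, mul_neg, gd_gg_mul_eq, mul_sub, mul_sub, gg_anticomm q a,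
        neg_sub, sub_neg_eq_add, gg_comm3 q a q, gg_sq, mul_zero]
      simp [if_neg hqa]
    · rw [gd_gg_mul_ne hqa, gd_gg_mul_ne hqb]
      simp [mul_neg, if_neg hqa, if_neg hqb, gg_comm3 q a b]

/-- commutator of the Grassmann Euler operator with mult by `x̀_a x̀_b`. -/
lemma grassE (l : Fin n) (g : Grass n) :
    EgF n (gg n (idx0 n l) * (gg n (idx1 n l) * g)) =
      gg n (idx0 n l) * (gg n (idx1 n l) * EgF n g) +
        2 • (gg n (idx0 n l) * (gg n (idx1 n l) * g)) := by
  have hab : idx0 n l ≠ idx1 n l := idx0_ne_idx1 l l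
  calc EgF n (gg n (idx0 n l) * (gg n (idx1 n l) * g))
      = ∑ q : Fin (2*n), ((if q = idx0 n l then gg n (idx0 n l) * (gg n (idx1 n l) * g) else 0) +
          (if q = idx1 n l then gg n (idx0 n l) * (gg n (idx1 n l) * g) else 0) +
          gg n (idx0 n l) * (gg n (idx1 n l) * (gg n q * gd n q g))) :=
        Finset.sum_congr rfl fun q _ => grassE_step hab q g
    _ = _ := by
        rw [Finset.sum_add_distrib, Finset.sum_add_distrib, Finset.sum_ite_eq',
          Finset.sum_ite_eq', ← Finset.mul_sum, ← Finset.mul_sum,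
          if_pos (Finset.mem_univ _), if_pos (Finset.mem_univ _), two_smul, EgF]
        abel

end Super
namespace Super
variable {m n : ℕ}

lemma sG_mul (g : Grass n) :
    sG n * g = ∑ l : Fin n, gg n (idx0 n l) * (gg n (idx1 n l) * g) := by
  rw [sG, Finset.sum_mul]
  exact Finset.sum_congr rfl fun l _ => mul_assoc _ _ _

/-- Grassmann commutator `[GgF, s·] = EgF - n`. -/
lemma G1 (g : Grass n) :
    GgF n (sG n * g) = sG n * GgF n g + EgF n g - n • g := by
  rw [sG_mul, GgF]
  have : ∀ j : Fin n, gd n (idx0 n j) (gd n (idx1 n j)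
      (∑ l : Fin n, gg n (idx0 n l) * (gg n (idx1 n l) * g))) =
      (∑ l : Fin n, gg n (idx0 n l) * (gg n (idx1 n l) *
        gd n (idx0 n j) (gd n (idx1 n j) g))) +
      (gg n (idx0 n j) * gd n (idx0 n j) g
        + gg n (idx1 n j) * gd n (idx1 n j) g - g) := by
    intro j
    rw [map_sum, map_sum]
    calc ∑ l : Fin n, gd n (idx0 n j) (gd n (idx1 n j)
            (gg n (idx0 n l) * (gg n (idx1 n l) * g)))
        = ∑ l : Fin n, (gg n (idx0 n l) * (gg n (idx1 n l) *
            (gd n (idx0 n j) (gd n (idx1 n j) g))) +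
          (if j = l then gg n (idx0 n j) * gd n (idx0 n j) g
            + gg n (idx1 n j) * gd n (idx1 n j) g - g else 0)) :=
          Finset.sum_congr rfl fun l _ => grassD j l g
      _ = _ := by rw [Finset.sum_add_distrib, Finset.sum_ite_eq, if_pos (Finset.mem_univ _)]
  rw [Finset.sum_congr rfl fun j _ => this j, Finset.sum_add_distrib, Finset.sum_sub_distrib,
    Finset.sum_const, Finset.card_univ, Fintype.card_fin, Finset.sum_comm]
  have h2 : ∑ j : Fin n, (gg n (idx0 n j) * gd n (idx0 n j) g
      + gg n (idx1 n j) * gd n (idx1 n j) g) = EgF n g := by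
    rw [EgF]; exact (sum_pair (fun q => gg n q * gd n q g)).symm
  rw [h2]
  have h3 : ∑ y : Fin n, ∑ x : Fin n,
      gg n (idx0 n y) * (gg n (idx1 n y) * gd n (idx0 n x) (gd n (idx1 n x) g)) =
      sG n * GgF n g := by
    rw [GgF, sG_mul]
    exact Finset.sum_congr rfl fun y _ => by rw [← Finset.mul_sum, ← Finset.mul_sum]
  rw [h3]
  abel

end Super
namespace Super
variable {m n : ℕ}
open MvPolynomial

/-- Grassmann commutator `[EgF, s·] = 2 s·`. -/
lemma G2 (g : Grass n) :
    EgF n (sG n * g) = sG n * EgF n g + 2 • (sG n * g) := by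
  have h0 : EgF n (sG n * g) =
      ∑ q : Fin (2*n), gg n q * gd n q (∑ l : Fin n, gg n (idx0 n l) * (gg n (idx1 n l) * g)) := by
    rw [EgF, sG_mul]
  rw [h0]
  calc ∑ q : Fin (2*n), gg n q * gd n q (∑ l : Fin n, gg n (idx0 n l) * (gg n (idx1 n l) * g))
      = ∑ q : Fin (2*n), ∑ l : Fin n, gg n q * gd n q (gg n (idx0 n l) * (gg n (idx1 n l) * g)) := by
        refine Finset.sum_congr rfl fun q _ => ?_
        rw [map_sum, Finset.mul_sum]
    _ = ∑ l : Fin n, ∑ q : Fin (2*n), gg n q * gd n q (gg n (idx0 n l) * (gg n (idx1 n l) * g)) :=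
        Finset.sum_comm
    _ = ∑ l : Fin n, (gg n (idx0 n l) * (gg n (idx1 n l) * EgF n g) +
          2 • (gg n (idx0 n l) * (gg n (idx1 n l) * g))) :=
        Finset.sum_congr rfl fun l _ => grassE l g
    _ = _ := by
        rw [Finset.sum_add_distrib, ← Finset.smul_sum, ← sG_mul, ← sG_mul]

def Qp (m : ℕ) : Poly m := ∑ i : Fin m, X i * X i
def DpF (m : ℕ) (p : Poly m) : Poly m := ∑ i : Fin m, pderiv i (pderiv i p)
def EpF (m : ℕ) (p : Poly m) : Poly m := ∑ i : Fin m, X i * pderiv i p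

lemma polyD (i l : Fin m) (p : Poly m) :
    pderiv i (pderiv i (X l * X l * p)) =
      X l * X l * pderiv i (pderiv i p) +
        (if i = l then 4 * (X i * pderiv i p) + 2 * p else 0) := by
  rcases eq_or_ne i l with rfl | h
  · simp [pderiv_mul, pderiv_X, Pi.single_apply]
    ring
  · simp [pderiv_mul, pderiv_X, Pi.single_apply, h, Ne.symm h]

/-- Poly commutator `[DpF, Qp·] = 4 EpF + 2m`. -/
lemma P1 (p : Poly m) :
    DpF m (Qp m * p) = Qp m * DpF m p + 4 * EpF m p + (2 * m : ℕ) * p := by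
  rw [DpF, Qp, Finset.sum_mul]
  calc ∑ i : Fin m, pderiv i (pderiv i (∑ l : Fin m, X l * X l * p))
      = ∑ i : Fin m, ∑ l : Fin m, (X l * X l * pderiv i (pderiv i p) +
          (if i = l then 4 * (X i * pderiv i p) + 2 * p else 0)) := by
        refine Finset.sum_congr rfl fun i _ => ?_
        rw [map_sum, map_sum]
        exact Finset.sum_congr rfl fun l _ => polyD i l p
    _ = _ := by
        simp only [Finset.sum_add_distrib, Finset.sum_ite_eq, Finset.mem_univ, if_pos,
          Finset.sum_const, Finset.card_univ, Fintype.card_fin]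
        rw [Finset.sum_comm (γ := Fin m)]
        simp only [← Finset.sum_mul, ← Finset.mul_sum]
        rw [← Qp, ← DpF, ← EpF, nsmul_eq_mul]
        push_cast
        ring

lemma polyE (i l : Fin m) (p : Poly m) :
    X i * pderiv i (X l * X l * p) =
      X l * X l * (X i * pderiv i p) + (if i = l then 2 * (X l * X l * p) else 0) := by
  rcases eq_or_ne i l with rfl | h
  · simp [pderiv_mul, pderiv_X, Pi.single_apply]
    ring
  · simp [pderiv_mul, pderiv_X, Pi.single_apply, h, Ne.symm h]
    ring

/-- Poly commutator `[EpF, Qp·] = 2 Qp·`. -/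
lemma P2 (p : Poly m) :
    EpF m (Qp m * p) = Qp m * EpF m p + 2 * (Qp m * p) := by
  rw [EpF, Qp, Finset.sum_mul]
  calc ∑ i : Fin m, X i * pderiv i (∑ l : Fin m, X l * X l * p)
      = ∑ i : Fin m, ∑ l : Fin m, (X l * X l * (X i * pderiv i p) +
          (if i = l then 2 * (X l * X l * p) else 0)) := by
        refine Finset.sum_congr rfl fun i _ => ?_
        rw [map_sum, Finset.mul_sum]
        exact Finset.sum_congr rfl fun l _ => polyE i l p
    _ = _ := by
        simp only [Finset.sum_add_distrib, Finset.sum_ite_eq, Finset.mem_univ, if_pos]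
        rw [Finset.sum_comm (γ := Fin m)]
        simp only [← Finset.sum_mul, ← Finset.mul_sum]
        rw [← Qp, ← EpF]

end Super
namespace Super
variable {m n : ℕ}
open MvPolynomial

lemma real_smul_eq_mul (c : ℕ) [c.AtLeastTwo] (v : P m n) :
    ((OfNat.ofNat c : ℝ)) • v = (OfNat.ofNat c : P m n) * v := by
  rw [show (OfNat.ofNat c : P m n) = algebraMap ℝ (P m n) (OfNat.ofNat c) from
    (map_ofNat _ c).symm, ← Algebra.smul_def]

lemma Delta_tmul (q : Poly m) (h : Grass n) :
    Delta m n (q ⊗ₜ h) = (4:ℝ) • (q ⊗ₜ[ℝ] GgF n h) - (DpF m q) ⊗ₜ h := by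
  simp [Delta, dg, dx, GgF, DpF, TensorProduct.tmul_sum, TensorProduct.sum_tmul,
    Finset.smul_sum]
  refine Finset.sum_congr rfl fun x _ => ?_
  rw [real_smul_eq_mul]

lemma Euler_tmul (q : Poly m) (h : Grass n) :
    Euler m n (q ⊗ₜ h) = (EpF m q) ⊗ₜ h + q ⊗ₜ[ℝ] (EgF n h) := by
  simp [Euler, mulX, mulG, dx, dg, EpF, EgF, Algebra.TensorProduct.tmul_mul_tmul,
    TensorProduct.tmul_sum, TensorProduct.sum_tmul]

lemma xsq_mul_tmul (q : Poly m) (h : Grass n) :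
    xsq m n * (q ⊗ₜ h) = q ⊗ₜ[ℝ] (sG n * h) - (Qp m * q) ⊗ₜ h := by
  simp [xsq, sG, Qp, sub_mul, Finset.sum_mul, Algebra.TensorProduct.tmul_mul_tmul,
    TensorProduct.sum_tmul]

end Super
namespace Super
variable {m n : ℕ}
open MvPolynomial

lemma real_natCast_smul_P (c : ℕ) (v : P m n) : ((c:ℕ):ℝ) • v = (c : P m n) * v := by
  rw [show ((c:ℕ) : P m n) = algebraMap ℝ (P m n) c from (map_natCast _ c).symm,
    ← Algebra.smul_def]

lemma natCast_mul_tmul (c : ℕ) (q : Poly m) (h : Grass n) :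
    ((c : Poly m) * q) ⊗ₜ[ℝ] h = ((c:ℕ):ℝ) • (q ⊗ₜ[ℝ] h) := by
  rw [show ((c:ℕ) : Poly m) = C ((c:ℕ):ℝ) from (map_natCast C c).symm, ← smul_eq_C_mul,
    TensorProduct.smul_tmul']

lemma ofNat_mul_tmul (c : ℕ) [c.AtLeastTwo] (q : Poly m) (h : Grass n) :
    ((OfNat.ofNat c : Poly m) * q) ⊗ₜ[ℝ] h = (OfNat.ofNat c : ℝ) • (q ⊗ₜ[ℝ] h) := by
  rw [show (OfNat.ofNat c : Poly m) = C (OfNat.ofNat c : ℝ) from (map_ofNat C c).symm,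
    ← smul_eq_C_mul, TensorProduct.smul_tmul']

lemma nsmul_tmul_grass (c : ℕ) (q : Poly m) (h : Grass n) :
    q ⊗ₜ[ℝ] (c • h) = ((c:ℕ):ℝ) • (q ⊗ₜ[ℝ] h) := by
  rw [← Nat.cast_smul_eq_nsmul ℝ c h, TensorProduct.tmul_smul]

lemma four_mul_tmul (q : Poly m) (h : Grass n) :
    ((4 : Poly m) * q) ⊗ₜ[ℝ] h = (4 : ℝ) • (q ⊗ₜ[ℝ] h) := by
  rw [show (4 : Poly m) = C (4 : ℝ) from (map_ofNat C 4).symm,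
    ← smul_eq_C_mul, TensorProduct.smul_tmul']

/-- KEY commutator: `Δ ∘ (x²·) = (x²·) ∘ Δ + 4𝔼 + 2M`. -/
lemma KeyD : Delta m n ∘ₗ LinearMap.mulLeft ℝ (xsq m n) =
    LinearMap.mulLeft ℝ (xsq m n) ∘ₗ Delta m n + (4:ℝ) • Euler m n +
      ((2*(m:ℕ):ℝ) - (4*(n:ℕ):ℝ)) • LinearMap.id := by
  apply TensorProduct.ext'
  intro q h
  simp only [LinearMap.comp_apply, LinearMap.mulLeft_apply, LinearMap.add_apply,
    LinearMap.smul_apply, LinearMap.id_apply]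
  rw [xsq_mul_tmul, map_sub, Delta_tmul, Delta_tmul, G1, P1, Euler_tmul, Delta_tmul]
  simp only [TensorProduct.tmul_sub, TensorProduct.tmul_add, TensorProduct.add_tmul,
    nsmul_tmul_grass, natCast_mul_tmul, four_mul_tmul, mul_sub, mul_smul_comm, xsq_mul_tmul,
    smul_sub, smul_add]
  push_cast
  module

end Super
namespace Super
variable {m n : ℕ}
open MvPolynomial

lemma two_mul_tmul (q : Poly m) (h : Grass n) :
    ((2 : Poly m) * q) ⊗ₜ[ℝ] h = (2 : ℝ) • (q ⊗ₜ[ℝ] h) := by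
  rw [show (2 : Poly m) = C (2 : ℝ) from (map_ofNat C 2).symm,
    ← smul_eq_C_mul, TensorProduct.smul_tmul']

/-- KEY commutator: `𝔼 ∘ (x²·) = (x²·) ∘ 𝔼 + 2(x²·)`. -/
lemma KeyE : Euler m n ∘ₗ LinearMap.mulLeft ℝ (xsq m n) =
    LinearMap.mulLeft ℝ (xsq m n) ∘ₗ Euler m n + (2:ℝ) • LinearMap.mulLeft ℝ (xsq m n) := by
  apply TensorProduct.ext'
  intro q h
  simp only [LinearMap.comp_apply, LinearMap.mulLeft_apply, LinearMap.add_apply,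
    LinearMap.smul_apply]
  rw [xsq_mul_tmul, map_sub, Euler_tmul, Euler_tmul, G2, P2, Euler_tmul]
  simp only [TensorProduct.tmul_sub, TensorProduct.tmul_add, TensorProduct.add_tmul,
    nsmul_tmul_grass, two_mul_tmul, mul_sub, mul_add, mul_smul_comm, xsq_mul_tmul,
    smul_sub, smul_add]
  push_cast
  module

end Super
namespace Super
variable {m n : ℕ}

lemma Mdim_cast : ((Mdim m n : ℤ) : ℝ) = (m : ℝ) - 2 * n := by
  rw [Mdim]; push_cast; ring

variable {k : ℕ} {H : P m n}

lemma euler_H (hH : H ∈ Hk m n k) : Euler m n H = (k:ℝ) • H := by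
  rw [Hk, Submodule.mem_inf] at hH
  have h1 : H ∈ LinearMap.ker (Euler m n - (k : ℝ) • LinearMap.id) := hH.1
  have h2 := LinearMap.mem_ker.mp h1
  rw [LinearMap.sub_apply, LinearMap.smul_apply, LinearMap.id_apply, sub_eq_zero] at h2
  exact h2

lemma delta_H (hH : H ∈ Hk m n k) : Delta m n H = 0 := by
  rw [Hk, Submodule.mem_inf] at hH
  exact LinearMap.mem_ker.mp hH.2

lemma xsq_assoc (t : ℕ) : xsq m n * (xsq m n ^ t * H) = xsq m n ^ (t+1) * H := by
  rw [← mul_assoc, ← pow_succ']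

lemma euler_pow (hH : H ∈ Hk m n k) (t : ℕ) :
    Euler m n (xsq m n ^ t * H) = (2*(t:ℝ) + (k:ℝ)) • (xsq m n ^ t * H) := by
  induction t with
  | zero => simpa using euler_H hH
  | succ t ih =>
      have hc := LinearMap.congr_fun (KeyE (m := m) (n := n)) (xsq m n ^ t * H)
      simp only [LinearMap.comp_apply, LinearMap.mulLeft_apply, LinearMap.add_apply,
        LinearMap.smul_apply] at hc
      rw [← xsq_assoc t, hc, ih, mul_smul_comm, xsq_assoc t]
      push_cast
      module

lemma delta_pow (hH : H ∈ Hk m n k) (t : ℕ) :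
    Delta m n (xsq m n ^ (t+1) * H) =
      (4 * ((t:ℝ)+1) * ((k:ℝ) + (Mdim m n : ℝ)/2 + t)) • (xsq m n ^ t * H) := by
  induction t with
  | zero =>
      have hc := LinearMap.congr_fun (KeyD (m := m) (n := n)) H
      simp only [LinearMap.comp_apply, LinearMap.mulLeft_apply, LinearMap.add_apply,
        LinearMap.smul_apply, LinearMap.id_apply] at hc
      rw [show xsq m n ^ 1 * H = xsq m n * H by rw [pow_one]]
      rw [hc, delta_H hH, euler_H hH, mul_zero, Mdim_cast]
      push_cast
      simp only [pow_zero, one_mul]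
      module
  | succ t ih =>
      have hc := LinearMap.congr_fun (KeyD (m := m) (n := n)) (xsq m n ^ (t+1) * H)
      simp only [LinearMap.comp_apply, LinearMap.mulLeft_apply, LinearMap.add_apply,
        LinearMap.smul_apply, LinearMap.id_apply] at hc
      rw [← xsq_assoc (t+1), hc, ih, euler_pow hH, mul_smul_comm, xsq_assoc t, Mdim_cast]
      push_cast
      module

end Super

namespace Super
variable {m n k : ℕ} {H : P m n}

lemma main1 (hH : H ∈ Hk m n k) (i j : ℕ) (hij : i ≤ j) :
    (Delta m n ^ i) (xsq m n ^ j * H) =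
      ((4 : ℝ) ^ i * ((j.factorial : ℝ) / ((j - i).factorial : ℝ)) *
          ∏ r ∈ Finset.range i,
            ((k : ℝ) + (Mdim m n : ℝ) / 2 + (j : ℝ) - ((r : ℝ) + 1))) •
        (xsq m n ^ (j - i) * H) := by
  induction i with
  | zero =>
      simp [div_self (show ((j.factorial : ℝ)) ≠ 0 from Nat.cast_ne_zero.mpr j.factorial_ne_zero)]
  | succ i ih =>
      have hij' : i ≤ j := Nat.le_of_succ_le hij
      have hsub : j - i = (j - (i+1)) + 1 := by omega
      rw [pow_succ', Module.End.mul_apply, ih hij', map_smul, hsub, delta_pow hH, smul_smul]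
      congr 1
      rw [Finset.prod_range_succ, Nat.factorial_succ]
      have hne1 : ((j - (i+1)).factorial : ℝ) ≠ 0 := Nat.cast_ne_zero.mpr (Nat.factorial_ne_zero _)
      have h2 : ((i:ℝ)) + 1 ≤ (j:ℝ) := by exact_mod_cast hij
      have hne2 : (j:ℝ) - ((i:ℝ)+1) + 1 ≠ 0 := ne_of_gt (by linarith)
      push_cast [Nat.cast_sub hij]
      field_simp
      ring

lemma main2 (hH : H ∈ Hk m n k) (i j : ℕ) (hij : j < i) :
    (Delta m n ^ i) (xsq m n ^ j * H) = 0 := by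
  have hstep : (Delta m n ^ (j+1)) (xsq m n ^ j * H) = 0 := by
    rw [pow_succ', Module.End.mul_apply, main1 hH j j le_rfl, map_smul, Nat.sub_self, pow_zero,
      one_mul, delta_H hH, smul_zero]
  have hdecomp : i = (i - (j+1)) + (j+1) := by omega
  rw [hdecomp, pow_add, Module.End.mul_apply, hstep, map_zero]

end Super


/-- For `M ∉ {0, -2, -4, …}` and a spherical harmonic `H_k ∈ ℋ_k`:
if `i ≤ j` then `Δ^i(x^{2j} H_k) = c_{i,j,k}·x^{2j-2i} H_k` with
`c_{i,j,k} = 4^i·(j!/(j-i)!)·∏_{r=1}^{i}(k + M/2 + j - r)`, and if `i > j` then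
`Δ^i(x^{2j} H_k) = 0`. -/
theorem iterated_laplace_on_fischer_pieces (m n : ℕ)
    (hM : ∀ t : ℕ, Super.Mdim m n ≠ -(2 * (t : ℤ)))
    (k : ℕ) (H : Super.P m n) (hH : H ∈ Super.Hk m n k) (i j : ℕ) :
    (i ≤ j →
      (Super.Delta m n ^ i) (Super.xsq m n ^ j * H) =
        ((4 : ℝ) ^ i * ((j.factorial : ℝ) / ((j - i).factorial : ℝ)) *
            ∏ r ∈ Finset.range i,
              ((k : ℝ) + (Super.Mdim m n : ℝ) / 2 + (j : ℝ) - ((r : ℝ) + 1))) •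
          (Super.xsq m n ^ (j - i) * H)) ∧
    (j < i → (Super.Delta m n ^ i) (Super.xsq m n ^ j * H) = 0) := by
  exact ⟨Super.main1 hH i j, Super.main2 hH i j⟩
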